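/- Let c₀ > c ≥ 1 and let A ⊆ S_n satisfy |A|/n! ≥ 1/cⁿ. Then there exists m ≥ (1 − log_{c₀}(c))·n with m ≡ n (mod 2) and a set B ⊆ S_m such that: B is (k, c₀^k)-pseudorandom for every even k ∈ [m]; the number of pairs in B differing by a single cycle is at most the number of pairs in A differing by a single cycle; |B|/m! ≥ |A|/n!; and if all permutations of A have the same sign then all permutations of B have the same sign. -/

import Mathlib

open Equiv Finset

/-- `A ⊆ S_n` is `(k, r)`-pseudorandom (real-valued version). -/
def PseudorandomR (n : ℕ) (A : Finset (Equiv.Perm (Fin n))) (k : ℕ) (r : ℝ) : Prop :=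
  ∀ I J : Fin k ↪ Fin n,
    ((A.filter fun π => ∀ j, π (J j) = I j).card : ℝ) / A.card < r / (n.descFactorial k)

open scoped Classical in
/-- The number of (ordered) pairs of elements of `A` differing by a single cycle,
i.e. edges of the Birkhoff graph inside `A`. -/
noncomputable def edgePairs (m : ℕ) (A : Finset (Equiv.Perm (Fin m))) : ℕ :=
  ((A ×ˢ A).filter fun p => (p.1 * p.2⁻¹).IsCycle).card

open scoped Classical in
lemma edgePairs_mono {m : ℕ} {A B : Finset (Equiv.Perm (Fin m))} (h : A ⊆ B) :
    edgePairs m A ≤ edgePairs m B := by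
  apply Finset.card_le_card
  intro p hp
  rw [Finset.mem_filter] at hp ⊢
  exact ⟨Finset.mem_product.mpr ⟨h (Finset.mem_product.mp hp.1).1, h (Finset.mem_product.mp hp.1).2⟩, hp.2⟩

open scoped Classical in
lemma edgePairs_image {a b : ℕ} (A : Finset (Equiv.Perm (Fin a)))
    (φ : Equiv.Perm (Fin a) → Equiv.Perm (Fin b))
    (hinj : Set.InjOn φ A)
    (hcyc : ∀ x ∈ A, ∀ y ∈ A, ((φ x) * (φ y)⁻¹).IsCycle ↔ (x * y⁻¹).IsCycle) :
    edgePairs b (A.image φ) = edgePairs a A := by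
  unfold edgePairs
  refine (Finset.card_bij (fun p _ => (φ p.1, φ p.2)) ?_ ?_ ?_).symm
  · rintro ⟨x, y⟩ hp
    rw [Finset.mem_filter, Finset.mem_product] at hp ⊢
    obtain ⟨⟨hx, hy⟩, hc⟩ := hp
    exact ⟨⟨Finset.mem_image_of_mem _ hx, Finset.mem_image_of_mem _ hy⟩,
      (hcyc x hx y hy).mpr hc⟩
  · rintro ⟨x, y⟩ hp ⟨x', y'⟩ hp' he
    rw [Finset.mem_filter, Finset.mem_product] at hp hp'
    simp only [Prod.mk.injEq] at he
    ext1
    · exact hinj hp.1.1 hp'.1.1 he.1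
    · exact hinj hp.1.2 hp'.1.2 he.2
  · rintro ⟨u, v⟩ hp
    rw [Finset.mem_filter, Finset.mem_product] at hp
    obtain ⟨⟨hu, hv⟩, hc⟩ := hp
    obtain ⟨x, hx, rfl⟩ := Finset.mem_image.mp hu
    obtain ⟨y, hy, rfl⟩ := Finset.mem_image.mp hv
    refine ⟨⟨x, y⟩, ?_, rfl⟩
    rw [Finset.mem_filter, Finset.mem_product]
    exact ⟨⟨hx, hy⟩, (hcyc x hx y hy).mp hc⟩

lemma exists_extendDomain {α β : Type*} {p : β → Prop} [DecidablePred p] (f : α ≃ Subtype p)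
    (ρ : Equiv.Perm β) (hfix : ∀ x, ¬ p x → ρ x = x) :
    ∃ ρ' : Equiv.Perm α, ρ'.extendDomain f = ρ := by
  have hiff : ∀ x, p x ↔ p (ρ x) := by
    intro x
    constructor
    · intro hx
      by_contra h
      have h2 := hfix _ h
      have h3 : ρ x = x := ρ.injective h2
      rw [h3] at h
      exact h hx
    · intro hx
      by_contra h
      rw [hfix x h] at hx
      exact h hx
  refine ⟨f.symm.permCongr (ρ.subtypePerm (fun x => (hiff x).symm)), ?_⟩
  ext x
  by_cases hx : p x
  · rw [Equiv.Perm.extendDomain_apply_subtype _ f hx]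
    simp [Equiv.permCongr_apply, Equiv.Perm.subtypePerm_apply]
  · rw [Equiv.Perm.extendDomain_apply_not_subtype _ f hx, hfix x hx]

lemma isCycle_of_extendDomain {α β : Type*} {p : β → Prop} [DecidablePred p] (f : α ≃ Subtype p)
    {ρ : Equiv.Perm α} (h : (ρ.extendDomain f).IsCycle) : ρ.IsCycle := by
  have key : ∀ (g : Equiv.Perm α) (z : α), (g.extendDomain f) (f z : β) = (f (g z) : β) := by
    intro g z
    exact Equiv.Perm.extendDomain_apply_image g f z
  obtain ⟨a, ha, hb⟩ := h
  have pa : p a := by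
    by_contra hpa
    exact ha (Equiv.Perm.extendDomain_apply_not_subtype ρ f hpa)
  set a₀ := f.symm ⟨a, pa⟩ with ha₀
  have hfa : (f a₀ : β) = a := by simp [ha₀]
  refine ⟨a₀, ?_, ?_⟩
  · intro hcon
    apply ha
    have h1 := key ρ a₀
    rw [hcon, hfa] at h1
    exact h1
  · intro y hy
    have h1 : (ρ.extendDomain f) (f y : β) ≠ (f y : β) := by
      rw [key ρ y]
      intro hc
      exact hy (f.injective (Subtype.ext hc))
    obtain ⟨i, hi⟩ := hb h1
    refine ⟨i, ?_⟩
    rw [← Equiv.Perm.extendDomain_zpow] at hi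
    rw [← hfa, key (ρ ^ i) a₀] at hi
    exact f.injective (Subtype.ext hi)

lemma isCycle_conj_iff {α : Type*} (g x : Equiv.Perm α) :
    (g * x * g⁻¹).IsCycle ↔ x.IsCycle := by
  constructor
  · intro h
    have := h.conj (g := g⁻¹)
    simpa [mul_assoc] using this
  · exact fun h => h.conj
set_option maxHeartbeats 1000000 in
open scoped Classical in
lemma step_lemma (c₀ : ℝ) (hc₀ : 0 < c₀) (m k : ℕ) (hk1 : 1 ≤ k) (hkm : k ≤ m)
    (B : Finset (Equiv.Perm (Fin m))) (hnp : ¬ PseudorandomR m B k (c₀ ^ k)) :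
    ∃ C : Finset (Equiv.Perm (Fin (m - k))),
      c₀ ^ k * ((B.card : ℝ) / m.factorial) ≤ (C.card : ℝ) / (m - k).factorial ∧
      edgePairs (m - k) C ≤ edgePairs m B ∧
      ((∀ π ∈ B, ∀ π' ∈ B, Equiv.Perm.sign π = Equiv.Perm.sign π') →
        ∀ τ ∈ C, ∀ τ' ∈ C, Equiv.Perm.sign τ = Equiv.Perm.sign τ') := by
  classical
  unfold PseudorandomR at hnp
  push_neg at hnp
  obtain ⟨I, J, hIJ⟩ := hnp
  -- the canonical embedding of the "last k" coordinates
  have hmem : ∀ j : Fin k, m - k + (j : ℕ) < m := by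
    intro j; omega
  set e : Fin k ↪ Fin m :=
    ⟨fun j => ⟨m - k + (j : ℕ), hmem j⟩, by
      intro j j' h
      have h2 : m - k + (j : ℕ) = m - k + (j' : ℕ) := congrArg Fin.val h
      exact Fin.ext (by omega)⟩ with he
  -- permutations carrying e to I resp. J
  set σ : Equiv.Perm (Fin m) :=
    (((Equiv.ofInjective e e.injective).symm.trans (Equiv.ofInjective I I.injective))).extendSubtype
    with hσ
  set τ : Equiv.Perm (Fin m) :=
    (((Equiv.ofInjective e e.injective).symm.trans (Equiv.ofInjective J J.injective))).extendSubtype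
    with hτ
  have hσe : ∀ j, σ (e j) = I j := by
    intro j
    rw [hσ, Equiv.extendSubtype_apply_of_mem _ _ ⟨j, rfl⟩]
    simp
  have hτe : ∀ j, τ (e j) = J j := by
    intro j
    rw [hτ, Equiv.extendSubtype_apply_of_mem _ _ ⟨j, rfl⟩]
    simp
  set F : Finset (Equiv.Perm (Fin m)) := B.filter fun π => ∀ j, π (J j) = I j with hF
  set D : Finset (Equiv.Perm (Fin m)) := F.image fun π => σ⁻¹ * π * τ with hD
  -- the equivalence for extendDomain
  set p : Fin m → Prop := fun x => (x : ℕ) < m - k with hp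
  set f : Fin (m - k) ≃ Subtype p :=
    { toFun := fun i => ⟨⟨(i : ℕ), lt_of_lt_of_le i.2 (Nat.sub_le m k)⟩, i.2⟩
      invFun := fun x => ⟨(x.1 : ℕ), x.2⟩
      left_inv := fun i => rfl
      right_inv := fun x => rfl } with hf
  -- every element of D fixes everything outside p
  have hDfix : ∀ ρ ∈ D, ∀ x : Fin m, ¬ p x → ρ x = x := by
    intro ρ hρ x hx
    rw [hD, Finset.mem_image] at hρ
    obtain ⟨π, hπ, rfl⟩ := hρ
    rw [hF, Finset.mem_filter] at hπ
    have hxval : (x : ℕ) = m - k + ((x : ℕ) - (m - k)) := by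
      rw [hp] at hx; omega
    have hxk : (x : ℕ) - (m - k) < k := by
      have := x.2; rw [hp] at hx; omega
    have hxe : x = e ⟨(x : ℕ) - (m - k), hxk⟩ := by
      apply Fin.ext
      exact hxval
    rw [hxe]
    have : (σ⁻¹ * π * τ) (e ⟨(x : ℕ) - (m - k), hxk⟩)
        = σ⁻¹ (π (J ⟨(x : ℕ) - (m - k), hxk⟩)) := by
      simp [Equiv.Perm.mul_apply, hτe]
    rw [this, hπ.2, ← hσe, ← Equiv.Perm.mul_apply, inv_mul_cancel, Equiv.Perm.one_apply]
  have hinjC : Set.InjOn (fun ρ' : Equiv.Perm (Fin (m - k)) => ρ'.extendDomain f)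
      ((fun ρ' : Equiv.Perm (Fin (m - k)) => ρ'.extendDomain f) ⁻¹' ↑D) :=
    (Equiv.Perm.extendDomainHom_injective f).injOn
  set C : Finset (Equiv.Perm (Fin (m - k))) :=
    D.preimage (fun ρ' => ρ'.extendDomain f)
      hinjC with hC
  have hCD : C.image (fun ρ' => ρ'.extendDomain f) = D := by
    apply Finset.Subset.antisymm
    · intro ρ hρ
      rw [Finset.mem_image] at hρ
      obtain ⟨ρ', hρ', rfl⟩ := hρ
      rw [hC, Finset.mem_preimage] at hρ'
      exact hρ'
    · intro ρ hρ
      obtain ⟨ρ', hρ'⟩ := exists_extendDomain f ρ (hDfix ρ hρ)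
      rw [Finset.mem_image]
      refine ⟨ρ', ?_, hρ'⟩
      rw [hC, Finset.mem_preimage]
      show ρ'.extendDomain f ∈ D
      rw [hρ']
      exact hρ
  have hcardCD : C.card = D.card := by
    rw [← hCD]
    exact (Finset.card_image_of_injective _ (Equiv.Perm.extendDomainHom_injective f)).symm
  have hcardDF : D.card = F.card :=
    Finset.card_image_of_injective _ (fun x y h => by
      simpa using mul_left_cancel (mul_right_cancel h))
  -- cardinality bound
  have hdesc : (0 : ℝ) < (m.descFactorial k : ℝ) := by
    have h0 : m.descFactorial k ≠ 0 := by
      rw [Ne, Nat.descFactorial_eq_zero_iff_lt]; omega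
    exact_mod_cast Nat.pos_of_ne_zero h0
  have hc₀k : (0 : ℝ) < c₀ ^ k := pow_pos hc₀ k
  have hFB : F.card ≤ B.card := by
    rw [hF]; exact Finset.card_le_card (Finset.filter_subset _ _)
  have hBpos : (0 : ℝ) < (B.card : ℝ) := by
    have hpos := div_pos hc₀k hdesc
    by_contra hB
    push_neg at hB
    have hB0 : (B.card : ℝ) = 0 := le_antisymm hB (Nat.cast_nonneg _)
    have hF0 : (F.card : ℝ) = 0 := by
      have h1 : B.card = 0 := Nat.cast_eq_zero.mp hB0
      have h2 : F.card = 0 := by omega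
      exact_mod_cast h2
    rw [hF0, hB0] at hIJ
    rw [zero_div] at hIJ
    linarith
  have h1 : c₀ ^ k / (m.descFactorial k : ℝ) * B.card ≤ F.card := by
    calc c₀ ^ k / (m.descFactorial k : ℝ) * B.card
        ≤ ((F.card : ℝ) / B.card) * B.card := mul_le_mul_of_nonneg_right hIJ hBpos.le
      _ = F.card := div_mul_cancel₀ _ hBpos.ne'
  have hfac : ((m - k).factorial : ℝ) * (m.descFactorial k : ℝ) = (m.factorial : ℝ) := by
    exact_mod_cast Nat.factorial_mul_descFactorial hkm
  have hfacpos : (0 : ℝ) < (m.factorial : ℝ) := by exact_mod_cast Nat.factorial_pos m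
  have hfacpos' : (0 : ℝ) < ((m - k).factorial : ℝ) := by exact_mod_cast Nat.factorial_pos (m - k)
  refine ⟨C, ?_, ?_, ?_⟩
  · -- density
    have hcardCF : (C.card : ℝ) = (F.card : ℝ) := by
      rw [hcardCD, hcardDF]
    rw [hcardCF]
    have e1 : c₀ ^ k * ((B.card : ℝ) / m.factorial) * ((m - k).factorial : ℝ)
        = c₀ ^ k / (m.descFactorial k : ℝ) * B.card := by
      have h2 : (m.factorial : ℝ) = ((m - k).factorial : ℝ) * (m.descFactorial k : ℝ) :=
        hfac.symm
      rw [h2, div_eq_mul_inv, div_eq_mul_inv, mul_inv]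
      have h3 : ((m - k).factorial : ℝ) ≠ 0 := ne_of_gt hfacpos'
      field_simp
    have key : c₀ ^ k * ((B.card : ℝ) / m.factorial) * ((m - k).factorial : ℝ)
        ≤ (F.card : ℝ) := by
      rw [e1]; exact h1
    exact (le_div_iff₀ hfacpos').mpr key
  · -- edges
    have h2 : edgePairs (m - k) C = edgePairs m D := by
      rw [← hCD]
      apply (edgePairs_image C (fun ρ' => ρ'.extendDomain f)
        ((Equiv.Perm.extendDomainHom_injective f).injOn) ?_).symm
      intro x _ y _
      have : x.extendDomain f * (y.extendDomain f)⁻¹ = (x * y⁻¹).extendDomain f := by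
        rw [← Equiv.Perm.extendDomain_mul]
        congr 1
      rw [this]
      exact ⟨fun h => isCycle_of_extendDomain f h, fun h => h.extendDomain f⟩
    have h3 : edgePairs m D = edgePairs m F := by
      rw [hD]
      apply edgePairs_image F (fun π => σ⁻¹ * π * τ)
        (fun x _ y _ h => by simpa using mul_left_cancel (mul_right_cancel h))
      intro x _ y _
      have : (σ⁻¹ * x * τ) * (σ⁻¹ * y * τ)⁻¹ = σ⁻¹ * (x * y⁻¹) * σ⁻¹⁻¹ := by
        group
      rw [this, isCycle_conj_iff]
    calc edgePairs (m - k) C = edgePairs m F := by rw [h2, h3]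
      _ ≤ edgePairs m B := edgePairs_mono (Finset.filter_subset _ _)
  · -- sign
    intro hsign τ₁ hτ₁ τ₂ hτ₂
    have key : ∀ ρ' ∈ C, ∃ π ∈ B, Equiv.Perm.sign ρ'
        = Equiv.Perm.sign σ * Equiv.Perm.sign π * Equiv.Perm.sign τ := by
      intro ρ' hρ'
      rw [hC, Finset.mem_preimage] at hρ'
      have : ρ'.extendDomain f ∈ D := hρ'
      rw [hD, Finset.mem_image] at this
      obtain ⟨π, hπ, hπeq⟩ := this
      rw [hF, Finset.mem_filter] at hπ
      refine ⟨π, hπ.1, ?_⟩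
      have hthis := congrArg Equiv.Perm.sign hπeq
      rw [Equiv.Perm.sign_extendDomain] at hthis
      rw [← hthis]
      simp [Equiv.Perm.sign_mul, Equiv.Perm.sign_inv]
    obtain ⟨π₁, hπ₁, hs₁⟩ := key τ₁ hτ₁
    obtain ⟨π₂, hπ₂, hs₂⟩ := key τ₂ hτ₂
    rw [hs₁, hs₂, hsign π₁ hπ₁ π₂ hπ₂]
set_option maxHeartbeats 1000000 in
lemma main_lemma (c₀ : ℝ) (hc₀ : 1 < c₀) :
    ∀ m : ℕ, ∀ B : Finset (Equiv.Perm (Fin m)),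
    ∃ m' : ℕ, m' ≤ m ∧ m' % 2 = m % 2 ∧
      ∃ C : Finset (Equiv.Perm (Fin m')),
        (∀ k ∈ Finset.Icc 1 m', Even k → PseudorandomR m' C k (c₀ ^ k)) ∧
        edgePairs m' C ≤ edgePairs m B ∧
        c₀ ^ (m - m') * ((B.card : ℝ) / m.factorial) ≤ (C.card : ℝ) / m'.factorial ∧
        ((∀ π ∈ B, ∀ π' ∈ B, Equiv.Perm.sign π = Equiv.Perm.sign π') →
          ∀ τ ∈ C, ∀ τ' ∈ C, Equiv.Perm.sign τ = Equiv.Perm.sign τ') := by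
  intro m
  induction m using Nat.strong_induction_on with
  | _ m ih =>
    intro B
    by_cases hp : ∀ k ∈ Finset.Icc 1 m, Even k → PseudorandomR m B k (c₀ ^ k)
    · exact ⟨m, le_refl m, rfl, B, hp, le_refl _, by simp, fun h => h⟩
    · push_neg at hp
      obtain ⟨k, hk, hkeven, hnp⟩ := hp
      rw [Finset.mem_Icc] at hk
      obtain ⟨C', hd', he', hs'⟩ :=
        step_lemma c₀ (lt_trans zero_lt_one hc₀) m k hk.1 hk.2 B hnp
      obtain ⟨m', hm', hpar, C, hpseudo, hedge, hdens, hsign⟩ := ih (m - k) (by omega) C'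
      refine ⟨m', by omega, ?_, C, hpseudo, le_trans hedge he', ?_, fun h => hsign (hs' h)⟩
      · obtain ⟨r, hr⟩ := hkeven
        omega
      · have hpow : c₀ ^ (m - m') = c₀ ^ (m - k - m') * c₀ ^ k := by
          rw [← pow_add]
          congr 1
          omega
        have h0 : (0 : ℝ) ≤ c₀ ^ (m - k - m') :=
          le_of_lt (pow_pos (lt_trans zero_lt_one hc₀) _)
        calc c₀ ^ (m - m') * ((B.card : ℝ) / m.factorial)
            = c₀ ^ (m - k - m') * (c₀ ^ k * ((B.card : ℝ) / m.factorial)) := by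
              rw [hpow]; ring
          _ ≤ c₀ ^ (m - k - m') * ((C'.card : ℝ) / (m - k).factorial) :=
              mul_le_mul_of_nonneg_left hd' h0
          _ ≤ (C.card : ℝ) / m'.factorial := hdens

set_option maxHeartbeats 1000000 in
/-- density increment. -/
theorem stmt12 (c₀ c : ℝ) (hc : 1 ≤ c) (hcc : c < c₀) (n : ℕ)
    (A : Finset (Equiv.Perm (Fin n)))
    (hA : 1 / c ^ n ≤ (A.card : ℝ) / n.factorial) :
    ∃ m : ℕ, (1 - Real.logb c₀ c) * n ≤ (m : ℝ) ∧ m % 2 = n % 2 ∧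
      ∃ B : Finset (Equiv.Perm (Fin m)),
        (∀ k ∈ Finset.Icc 1 m, Even k → PseudorandomR m B k (c₀ ^ k)) ∧
        edgePairs m B ≤ edgePairs n A ∧
        (A.card : ℝ) / n.factorial ≤ (B.card : ℝ) / m.factorial ∧
        ((∀ π ∈ A, ∀ π' ∈ A, Equiv.Perm.sign π = Equiv.Perm.sign π') →
          ∀ τ ∈ B, ∀ τ' ∈ B, Equiv.Perm.sign τ = Equiv.Perm.sign τ') := by
  have hc₀ : 1 < c₀ := lt_of_le_of_lt hc hcc
  have hc₀pos : (0 : ℝ) < c₀ := lt_trans zero_lt_one hc₀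
  have hcpos : (0 : ℝ) < c := lt_of_lt_of_le zero_lt_one hc
  obtain ⟨m, hmn, hpar, B, hpseudo, hedge, hdens, hsign⟩ := main_lemma c₀ hc₀ n A
  have hApos : (0 : ℝ) < (A.card : ℝ) / n.factorial :=
    lt_of_lt_of_le (by positivity) hA
  have hdens2 : (A.card : ℝ) / n.factorial ≤ (B.card : ℝ) / m.factorial := by
    have hpow1 : (1 : ℝ) ≤ c₀ ^ (n - m) := one_le_pow₀ hc₀.le
    calc (A.card : ℝ) / n.factorial
        ≤ c₀ ^ (n - m) * ((A.card : ℝ) / n.factorial) :=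
          le_mul_of_one_le_left hApos.le hpow1
      _ ≤ (B.card : ℝ) / m.factorial := hdens
  refine ⟨m, ?_, hpar, B, hpseudo, hedge, hdens2, hsign⟩
  -- the lower bound on m
  have hB1 : (B.card : ℝ) / m.factorial ≤ 1 := by
    have hcard : B.card ≤ m.factorial := by
      have h := Finset.card_le_univ B
      simpa [Fintype.card_perm, Fintype.card_fin] using h
    rw [div_le_one (by exact_mod_cast Nat.factorial_pos m)]
    exact_mod_cast hcard
  have key : c₀ ^ (n - m) * (1 / c ^ n) ≤ 1 := by
    calc c₀ ^ (n - m) * (1 / c ^ n)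
        ≤ c₀ ^ (n - m) * ((A.card : ℝ) / n.factorial) :=
          mul_le_mul_of_nonneg_left hA (le_of_lt (pow_pos hc₀pos _))
      _ ≤ (B.card : ℝ) / m.factorial := hdens
      _ ≤ 1 := hB1
  have key2 : c₀ ^ (n - m) ≤ c ^ n := by
    have hcn : (0 : ℝ) < c ^ n := pow_pos hcpos n
    rw [mul_one_div, div_le_one hcn] at key
    exact key
  have hlog : ((n - m : ℕ) : ℝ) ≤ (n : ℝ) * Real.logb c₀ c := by
    have h1 : Real.logb c₀ (c₀ ^ (n - m)) ≤ Real.logb c₀ (c ^ n) :=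
      (Real.logb_le_logb hc₀ (pow_pos hc₀pos _) (pow_pos hcpos n)).mpr key2
    rwa [Real.logb_pow, Real.logb_pow, Real.logb_self_eq_one hc₀, mul_one] at h1
  have hcast : ((n - m : ℕ) : ℝ) = (n : ℝ) - m := by
    rw [Nat.cast_sub hmn]
  rw [hcast] at hlog
  have hexp : (1 - Real.logb c₀ c) * n = (n : ℝ) - n * Real.logb c₀ c := by ring
  linarith
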